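/- Directed recursive formula (Theorem 4): in a directed setting, for r ∈ {1,…,n}, MMJ(Ω_r, Ω_{n+1} | Ω_{[1,n+1]}) = min over t ∈ {1,…,n} of max( MMJ(Ω_r, Ω_t | Ω_{[1,n]}), d(Ω_t, Ω_{n+1}) ). -/

import Mathlib

/-- The maximum jump (distance between consecutive points) along a list of points. -/
def maxJump {α : Type*} (d : α → α → ℝ) : List α → ℝ
  | a :: b :: l => max (d a b) (maxJump d (b :: l))
  | _ => 0

/-- `L` is a path from `i` to `j` all of whose points lie in `S`. -/
def IsPathIn {α : Type*} (S : Set α) (i j : α) (L : List α) : Prop :=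
  L.head? = some i ∧ L.getLast? = some j ∧ ∀ x ∈ L, x ∈ S

/-- Min-Max-Jump distance between `i` and `j` under the context `S`. -/
noncomputable def MMJ {α : Type*} (d : α → α → ℝ) (S : Set α) (i j : α) : ℝ :=
  sInf {m : ℝ | ∃ L : List α, IsPathIn S i j L ∧ maxJump d L = m}

namespace MMJaux

variable {α : Type*} (d : α → α → ℝ)

lemma maxJump_nonneg (hd : ∀ x y, 0 ≤ d x y) : ∀ L : List α, 0 ≤ maxJump d L
  | [] => le_refl 0
  | [_] => le_refl 0
  | a :: b :: _ => le_max_of_le_left (hd a b)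

lemma maxJump_append_last :
    ∀ (l : List α) (a x : α), l.getLast? = some a →
      maxJump d (l ++ [x]) = max (maxJump d l) (d a x)
  | [], a, x => by simp
  | [b], a, x => by
      intro h
      simp only [List.getLast?_singleton, Option.some_inj] at h
      subst h
      simp [maxJump, max_comm]
  | b :: c :: l, a, x => by
      intro h
      have ih := maxJump_append_last (c :: l) a x (by simpa using h)
      simp only [List.cons_append] at ih ⊢
      rw [show maxJump d (b :: c :: (l ++ [x])) = max (d b c) (maxJump d (c :: (l ++ [x]))) from rfl,
        ih, show maxJump d (b :: c :: l) = max (d b c) (maxJump d (c :: l)) from rfl, max_assoc]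

lemma maxJump_prefix (hd : ∀ x y, 0 ≤ d x y) :
    ∀ (l : List α) (x : α) (rest : List α),
      maxJump d (l ++ [x]) ≤ maxJump d (l ++ x :: rest)
  | [], x, rest => by
      simpa [maxJump] using maxJump_nonneg d hd (x :: rest)
  | [a], x, rest => by
      simp only [List.cons_append, List.nil_append]
      exact max_le_max le_rfl (maxJump_nonneg d hd (x :: rest))
  | a :: b :: l, x, rest => by
      simp only [List.cons_append]
      exact max_le_max le_rfl (by
        simpa using maxJump_prefix hd (b :: l) x rest)

lemma exists_first_occ {z : α} : ∀ {L : List α}, z ∈ L →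
    ∃ P rest, L = P ++ z :: rest ∧ z ∉ P := by
  intro L hz
  induction L with
  | nil => simp at hz
  | cons a L ih =>
    by_cases h : a = z
    · exact ⟨[], L, by simp [h], by simp⟩
    · obtain ⟨P, rest, hL, hzP⟩ := ih (by
        rcases List.mem_cons.mp hz with h' | h'
        · exact absurd h'.symm h
        · exact h')
      exact ⟨a :: P, rest, by simp [hL], by
        simp only [List.mem_cons, not_or]
        exact ⟨fun e => h e.symm, hzP⟩⟩

lemma mmj_bddBelow (hd : ∀ x y, 0 ≤ d x y) (S : Set α) (i j : α) :
    BddBelow {m : ℝ | ∃ L : List α, IsPathIn S i j L ∧ maxJump d L = m} :=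
  ⟨0, by rintro m ⟨L, _, rfl⟩; exact maxJump_nonneg d hd L⟩

lemma mmj_nonempty (S : Set α) (i j : α) (hi : i ∈ S) (hj : j ∈ S) :
    {m : ℝ | ∃ L : List α, IsPathIn S i j L ∧ maxJump d L = m}.Nonempty :=
  ⟨maxJump d [i, j], [i, j], ⟨rfl, rfl, by
    intro x hx
    rcases List.mem_pair.mp hx with h | h <;> subst h <;> assumption⟩, rfl⟩

lemma mmj_le (hd : ∀ x y, 0 ≤ d x y) (S : Set α) (i j : α) (L : List α)
    (hL : IsPathIn S i j L) : MMJ d S i j ≤ maxJump d L :=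
  csInf_le (mmj_bddBelow d hd S i j) ⟨L, hL, rfl⟩

end MMJaux

open MMJaux in
theorem mmj_directed_recursion {α : Type*} (d : α → α → ℝ)
    (hd : ∀ x y, 0 ≤ d x y) (Ω : ℕ → α)
    (n : ℕ) (hn : 1 ≤ n) (hinj : Set.InjOn Ω (Set.Icc 1 (n + 1)))
    (r : ℕ) (hr : r ∈ Finset.Icc 1 n) :
    MMJ d (Ω '' Set.Icc 1 (n + 1)) (Ω r) (Ω (n + 1)) =
      (Finset.Icc 1 n).inf' (Finset.nonempty_Icc.mpr hn)
        (fun t => max (MMJ d (Ω '' Set.Icc 1 n) (Ω r) (Ω t))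
          (d (Ω t) (Ω (n + 1)))) := by
  obtain ⟨hr1, hrn⟩ := Finset.mem_Icc.mp hr
  set z := Ω (n + 1) with hz
  set S := Ω '' Set.Icc 1 (n + 1) with hS
  set S' := Ω '' Set.Icc 1 n with hS'
  have hsub : S' ⊆ S := Set.image_mono (Set.Icc_subset_Icc_right (by omega))
  have hmem : ∀ t, 1 ≤ t → t ≤ n → Ω t ∈ S' := fun t h1 h2 => ⟨t, ⟨h1, h2⟩, rfl⟩
  have hzS : z ∈ S := ⟨n + 1, ⟨by omega, le_rfl⟩, rfl⟩
  have hne : ∀ t, 1 ≤ t → t ≤ n → Ω t ≠ z := by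
    intro t h1 h2 h
    have := hinj ⟨h1, by omega⟩ ⟨by omega, le_rfl⟩ h
    omega
  apply le_antisymm
  · -- LHS ≤ RHS
    obtain ⟨t, ht, hEq⟩ := Finset.exists_mem_eq_inf' (Finset.nonempty_Icc.mpr hn)
      (fun t => max (MMJ d S' (Ω r) (Ω t)) (d (Ω t) z))
    rw [hEq]
    obtain ⟨ht1, htn⟩ := Finset.mem_Icc.mp ht
    set B := {m : ℝ | ∃ L : List α, IsPathIn S' (Ω r) (Ω t) L ∧ maxJump d L = m} with hB
    have hBne : B.Nonempty := mmj_nonempty d S' _ _ (hmem r hr1 hrn) (hmem t ht1 htn)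
    have hBbdd : BddBelow B := mmj_bddBelow d hd S' _ _
    set c := d (Ω t) z with hc
    have hmap : max (sInf B) c = sInf ((fun b => max b c) '' B) :=
      Monotone.map_csInf_of_continuousAt
        ((continuous_id.max continuous_const).continuousAt)
        (fun a b h => max_le_max h le_rfl) hBne hBbdd
    have : MMJ d S' (Ω r) (Ω t) = sInf B := rfl
    rw [this, hmap]
    apply le_csInf (hBne.image _)
    rintro y ⟨b, ⟨P, ⟨hPh, hPl, hPm⟩, rfl⟩, rfl⟩
    have hPne : P ≠ [] := by rintro rfl; simp at hPh
    have hpath : IsPathIn S (Ω r) z (P ++ [z]) := by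
      refine ⟨?_, ?_, ?_⟩
      · rwa [List.head?_append_of_ne_nil _ hPne]
      · simp
      · intro x hx
        rcases List.mem_append.mp hx with h | h
        · exact hsub (hPm x h)
        · simp at h; subst h; exact hzS
    have hval : maxJump d (P ++ [z]) = max (maxJump d P) c :=
      maxJump_append_last d P (Ω t) z hPl
    calc MMJ d S (Ω r) z ≤ maxJump d (P ++ [z]) := mmj_le d hd S _ _ _ hpath
      _ = max (maxJump d P) c := hval
      _ = (fun b => max b c) (maxJump d P) := rfl
  · -- RHS ≤ LHS
    apply le_csInf (mmj_nonempty d S _ _ (hsub (hmem r hr1 hrn)) hzS)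
    rintro m ⟨L, ⟨hLh, hLl, hLm⟩, rfl⟩
    have hLne : L ≠ [] := by rintro rfl; simp at hLh
    have hzL : z ∈ L := by
      have := List.getLast?_eq_getLast hLne
      rw [this, Option.some_inj] at hLl
      rw [← hLl]; exact List.getLast_mem hLne
    obtain ⟨P, rest, hLP, hzP⟩ := exists_first_occ hzL
    have hPne : P ≠ [] := by
      rintro rfl
      simp only [List.nil_append] at hLP
      rw [hLP] at hLh
      simp only [List.head?_cons, Option.some_inj] at hLh
      exact hne r hr1 hrn hLh.symm
    -- points of P are in S'
    have hPS' : ∀ x ∈ P, x ∈ S' := by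
      intro x hx
      have hxL : x ∈ L := by rw [hLP]; exact List.mem_append_left _ hx
      obtain ⟨s, ⟨hs1, hs2⟩, hsx⟩ := hLm x hxL
      have hsn : s ≤ n := by
        rcases Nat.lt_succ_iff_lt_or_eq.mp (Nat.lt_succ_of_le hs2) with h | h
        · omega
        · exfalso; subst h
          exact hzP (show z ∈ P by rw [hz, hsx]; exact hx)
      exact ⟨s, ⟨hs1, hsn⟩, hsx⟩
    -- last of P is some Ω t, t ∈ [1,n]
    obtain ⟨a, ha⟩ : ∃ a, P.getLast? = some a :=
      ⟨P.getLast hPne, List.getLast?_eq_getLast hPne⟩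
    have haP : a ∈ P := by
      rw [List.getLast?_eq_getLast hPne, Option.some_inj] at ha
      rw [← ha]; exact List.getLast_mem hPne
    obtain ⟨t, ⟨ht1, htn⟩, hta⟩ := hPS' a haP
    have hPpath : IsPathIn S' (Ω r) (Ω t) P := by
      refine ⟨?_, by rw [ha, hta], hPS'⟩
      rw [hLP, List.head?_append_of_ne_nil _ hPne] at hLh
      exact hLh
    have h1 : MMJ d S' (Ω r) (Ω t) ≤ maxJump d P := mmj_le d hd S' _ _ _ hPpath
    have h2 : maxJump d (P ++ [z]) = max (maxJump d P) (d (Ω t) z) := by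
      rw [maxJump_append_last d P a z ha, hta]
    have h3 : maxJump d (P ++ [z]) ≤ maxJump d L := by
      rw [hLP]; exact maxJump_prefix d hd P z rest
    calc (Finset.Icc 1 n).inf' (Finset.nonempty_Icc.mpr hn)
          (fun t => max (MMJ d S' (Ω r) (Ω t)) (d (Ω t) z))
        ≤ max (MMJ d S' (Ω r) (Ω t)) (d (Ω t) z) :=
          Finset.inf'_le _ (Finset.mem_Icc.mpr ⟨ht1, htn⟩)
      _ ≤ max (maxJump d P) (d (Ω t) z) := max_le_max h1 le_rfl
      _ = maxJump d (P ++ [z]) := h2.symm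
      _ ≤ maxJump d L := h3
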